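/- Let v₁, ..., v_k ∈ ℝ^N be linearly independent with |v_iᵀ v_j| ≤ ε for i ≠ j and | ‖v_i‖² - 1 | ≤ ε for all i, for sufficiently small ε > 0. Let u₁, ..., u_k be the result of Gram–Schmidt orthonormalization of v₁, ..., v_k. Then there is a constant Q depending only on k such that ‖u_i - v_i‖ ≤ Q ε for all 1 ≤ i ≤ k. -/

import Mathlib

open scoped BigOperators RealInnerProductSpace

/-- Gram–Schmidt orthonormalization of a finite family of vectors (Mathlib's
`gramSchmidtNormed`, with the well-founded-order instance supplied explicitly). -/
noncomputable def gramSchmidtGS {N k : ℕ} (v : Fin k → EuclideanSpace ℝ (Fin N)) :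
    Fin k → EuclideanSpace ℝ (Fin N) :=
  haveI : WellFoundedLT (Fin k) := inferInstance
  InnerProductSpace.gramSchmidtNormed ℝ v

/-- Recursively defined constants for the Gram–Schmidt stability estimate. -/
noncomputable def stmt19QC (k : ℕ) : ℕ → ℝ
  | 0 => 1
  | m + 1 => stmt19QC k m + 1 + 2 * k * (1 + 2 * stmt19QC k m)

lemma stmt19QC_one_le (k m : ℕ) : 1 ≤ stmt19QC k m := by
  induction m with
  | zero => simp [stmt19QC]
  | succ m ih =>
    have hk : (0:ℝ) ≤ (k:ℝ) := Nat.cast_nonneg k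
    simp only [stmt19QC]
    nlinarith

lemma stmt19_abs_aux {a : ℝ} (h0 : 0 ≤ a) (ha : a ≠ 0) :
    |a⁻¹ - 1| * a = |1 - a| := by
  have h : (a⁻¹ - 1) * a = 1 - a := by field_simp
  calc |a⁻¹ - 1| * a = |(a⁻¹ - 1) * a| := by rw [abs_mul, abs_of_nonneg h0]
    _ = |1 - a| := by rw [h]

lemma stmt19QC_mono (k : ℕ) : Monotone (stmt19QC k) := by
  apply monotone_nat_of_le_succ
  intro m
  have h1 := stmt19QC_one_le k m
  have hk : (0:ℝ) ≤ (k:ℝ) := Nat.cast_nonneg k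
  simp only [stmt19QC]
  nlinarith

/-- stability of Gram–Schmidt orthonormalization for nearly orthonormal
vectors: for `ε` sufficiently small, if `|v_iᵀ v_j| ≤ ε` for `i ≠ j` and
`|‖v_i‖² - 1| ≤ ε`, and `u = GS(v)` is the Gram–Schmidt orthonormalization, then
`‖u_i - v_i‖ ≤ Q ε` with `Q` depending only on `k`. -/
theorem stmt19 (k : ℕ) :
    ∃ ε₀ : ℝ, 0 < ε₀ ∧ ∃ Q : ℝ,
      ∀ (N : ℕ) (ε : ℝ) (v : Fin k → EuclideanSpace ℝ (Fin N)),
        0 < ε → ε ≤ ε₀ → LinearIndependent ℝ v →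
        (∀ i j, i ≠ j → |⟪v i, v j⟫| ≤ ε) → (∀ i, |‖v i‖ ^ 2 - 1| ≤ ε) →
        ∀ i, ‖gramSchmidtGS v i - v i‖ ≤ Q * ε := by
  refine ⟨1, one_pos, stmt19QC k k, ?_⟩
  intro N ε v hε hε1 hli hvv hvn
  haveI : WellFoundedLT (Fin k) := inferInstance
  set g : Fin k → EuclideanSpace ℝ (Fin N) := InnerProductSpace.gramSchmidt ℝ v with hgdef
  set u : Fin k → EuclideanSpace ℝ (Fin N) := InnerProductSpace.gramSchmidtNormed ℝ v with hudef
  have hg0 : ∀ i, g i ≠ 0 := fun i => InnerProductSpace.gramSchmidt_ne_zero i hli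
  have hgn0 : ∀ i, ‖g i‖ ≠ 0 := fun i => norm_ne_zero_iff.mpr (hg0 i)
  have hon : Orthonormal ℝ u := InnerProductSpace.gramSchmidtNormed_orthonormal hli
  have hunorm : ∀ i, ‖u i‖ = 1 := hon.1
  have hug : ∀ i, u i = ‖g i‖⁻¹ • g i := fun i => rfl
  -- basic bounds on the norms of the `v i`
  have hvle : ∀ i, ‖v i‖ ≤ 2 := by
    intro i
    have h := hvn i; rw [abs_le] at h
    nlinarith [norm_nonneg (v i)]
  have hv1 : ∀ i, |‖v i‖ - 1| ≤ ε := by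
    intro i
    have h := hvn i; rw [abs_le] at h ⊢
    constructor <;> nlinarith [norm_nonneg (v i)]
  -- the Gram–Schmidt defect identity
  have hdef : ∀ i, v i - g i = ∑ j ∈ Finset.Iio i, ⟪u j, v i⟫ • u j := by
    intro i
    have h2 := InnerProductSpace.gramSchmidt_def'' ℝ v i
    have h2' := sub_eq_iff_eq_add'.mpr h2
    rw [h2']
    refine Finset.sum_congr rfl fun j _ => ?_
    show (⟪g j, v i⟫ / (‖g j‖ : ℝ) ^ 2) • g j = ⟪u j, v i⟫ • u j
    rw [hug j, real_inner_smul_left, smul_smul]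
    congr 1
    rw [pow_two, div_eq_mul_inv, mul_inv]
    ring
  -- main induction
  have key : ∀ n : ℕ, ∀ i : Fin k, i.val = n → ‖u i - v i‖ ≤ stmt19QC k n * ε := by
    intro n
    induction n using Nat.strong_induction_on with
    | _ n ih =>
      intro i hi
      -- bound on the defect S
      have hsum : ‖v i - g i‖ ≤ ∑ j ∈ Finset.Iio i, |⟪u j, v i⟫| := by
        rw [hdef i]
        refine (norm_sum_le _ _).trans_eq ?_
        refine Finset.sum_congr rfl fun j _ => ?_
        rw [norm_smul, hunorm j, mul_one, Real.norm_eq_abs]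
      -- case split on n
      obtain _ | m := n
      · -- i.val = 0 : the sum is empty
        have hIio : Finset.Iio i = ∅ := by
          refine Finset.eq_empty_of_forall_notMem fun j hj => ?_
          rw [Finset.mem_Iio] at hj
          have : j.val < i.val := hj
          omega
        have hS : ‖v i - g i‖ ≤ 0 := by
          simpa [hIio] using hsum
        have hgv : g i = v i := by
          have h0 : v i - g i = 0 :=
            norm_eq_zero.mp (le_antisymm hS (norm_nonneg _))
          exact (sub_eq_zero.mp h0).symm
        -- now u i - v i = (‖v i‖⁻¹ - 1) • v i
        have : u i - v i = (‖v i‖⁻¹ - 1) • v i := by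
          rw [hug i, hgv, sub_smul, one_smul]
        rw [this, norm_smul, Real.norm_eq_abs]
        have hvne : ‖v i‖ ≠ 0 := by rw [← hgv]; exact hgn0 i
        rw [stmt19_abs_aux (norm_nonneg (v i)) hvne, abs_sub_comm]
        calc |‖v i‖ - 1| ≤ ε := hv1 i
          _ ≤ stmt19QC k 0 * ε := by
              have := stmt19QC_one_le k 0; nlinarith
      · -- i.val = m + 1
        have hQm0 : 0 ≤ stmt19QC k m := le_trans zero_le_one (stmt19QC_one_le k m)
        have hterm : ∀ j ∈ Finset.Iio i, |⟪u j, v i⟫| ≤ (1 + 2 * stmt19QC k m) * ε := by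
          intro j hj
          rw [Finset.mem_Iio] at hj
          have hjm : j.val ≤ m := by
            have : j.val < i.val := hj
            omega
          have hji : ‖u j - v j‖ ≤ stmt19QC k j.val * ε :=
            ih j.val (by omega) j rfl
          have hjm' : ‖u j - v j‖ ≤ stmt19QC k m * ε :=
            hji.trans (mul_le_mul_of_nonneg_right (stmt19QC_mono k hjm) hε.le)
          have hsplit : ⟪u j, v i⟫ = ⟪v j, v i⟫ + ⟪u j - v j, v i⟫ := by
            rw [← inner_add_left]
            congr 1
            abel
          have h1 : |⟪v j, v i⟫| ≤ ε := hvv j i (ne_of_lt hj)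
          have h2 : |⟪u j - v j, v i⟫| ≤ ‖u j - v j‖ * ‖v i‖ :=
            abs_real_inner_le_norm _ _
          have h3 : ‖u j - v j‖ * ‖v i‖ ≤ (stmt19QC k m * ε) * 2 :=
            mul_le_mul hjm' (hvle i) (norm_nonneg _) (by positivity)
          calc |⟪u j, v i⟫| ≤ |⟪v j, v i⟫| + |⟪u j - v j, v i⟫| := by
                rw [hsplit]; exact abs_add_le _ _
            _ ≤ ε + (stmt19QC k m * ε) * 2 := by linarith
            _ = (1 + 2 * stmt19QC k m) * ε := by ring
        have hcard : (Finset.Iio i).card ≤ k := by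
          rw [Fin.card_Iio]; exact i.isLt.le
        have hS : ‖v i - g i‖ ≤ (k : ℝ) * ((1 + 2 * stmt19QC k m) * ε) := by
          calc ‖v i - g i‖ ≤ ∑ j ∈ Finset.Iio i, |⟪u j, v i⟫| := hsum
            _ ≤ (Finset.Iio i).card • ((1 + 2 * stmt19QC k m) * ε) :=
                Finset.sum_le_card_nsmul _ _ _ hterm
            _ = ((Finset.Iio i).card : ℝ) * ((1 + 2 * stmt19QC k m) * ε) := by
                rw [nsmul_eq_mul]
            _ ≤ (k : ℝ) * ((1 + 2 * stmt19QC k m) * ε) := by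
                have : ((Finset.Iio i).card : ℝ) ≤ (k : ℝ) := by exact_mod_cast hcard
                have hpos : 0 ≤ (1 + 2 * stmt19QC k m) * ε := by positivity
                nlinarith
        -- norm of g i is close to 1
        set S := ‖v i - g i‖ with hSdef
        have hgv' : |‖g i‖ - 1| ≤ ε + S := by
          have h1 : |‖g i‖ - ‖v i‖| ≤ S := by
            rw [hSdef, norm_sub_rev]; exact abs_norm_sub_norm_le _ _
          have h2 := hv1 i
          calc |‖g i‖ - 1| = |(‖g i‖ - ‖v i‖) + (‖v i‖ - 1)| := by congr 1; ring
            _ ≤ |‖g i‖ - ‖v i‖| + |‖v i‖ - 1| := abs_add_le _ _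
            _ ≤ ε + S := by linarith
        have hug' : ‖u i - g i‖ = |1 - ‖g i‖| := by
          have h : u i - g i = (‖g i‖⁻¹ - 1) • g i := by
            rw [hug i, sub_smul, one_smul]
          rw [h, norm_smul, Real.norm_eq_abs,
            stmt19_abs_aux (norm_nonneg (g i)) (hgn0 i)]
        have hfinal : ‖u i - v i‖ ≤ ε + 2 * S := by
          calc ‖u i - v i‖ ≤ ‖u i - g i‖ + ‖g i - v i‖ := by
                have := norm_add_le (u i - g i) (g i - v i)
                simpa using this
            _ = |1 - ‖g i‖| + S := by rw [hug', hSdef, norm_sub_rev]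
            _ = |‖g i‖ - 1| + S := by rw [abs_sub_comm]
            _ ≤ (ε + S) + S := by linarith
            _ = ε + 2 * S := by ring
        have hbound : ε + 2 * S ≤ stmt19QC k (m + 1) * ε := by
          have hk : (0:ℝ) ≤ (k:ℝ) := Nat.cast_nonneg k
          simp only [stmt19QC]
          nlinarith
        exact hfinal.trans hbound
  -- conclude
  intro i
  have h := key i.val i rfl
  have hmono : stmt19QC k i.val ≤ stmt19QC k k := stmt19QC_mono k i.isLt.le
  have : ‖gramSchmidtGS v i - v i‖ = ‖u i - v i‖ := rfl
  rw [this]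
  exact h.trans (mul_le_mul_of_nonneg_right hmono hε.le)
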